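/- Let div := ∂P/∂x + ∂Q/∂y = (1+B)C − (2B+AC)y + (2+B−2C)x − 3x² − 2Axy be the divergence of the vector field. There exist no real numbers λ₁, λ₂, λ₃, λ₄ such that λ₁K₁ + λ₂K₂ + λ₃K₃ + λ₄K₄ + div = 0 as a polynomial identity, where K₁(x,y) = (C+x)(1−x−Ay), K₂(x,y) = x(1−x−Ay), K₃(x,y) = B(C+x−y), K₄(x,y) = B·y·(C+x−y). (Hence the system admits no Darboux integrating factor built from these cofactors.) -/
import Mathlib


/-- There is no linear combination of the cofactors
`K₁ = (C+x)(1−x−Ay)`, `K₂ = x(1−x−Ay)`, `K₃ = B(C+x−y)`, `K₄ = B·y·(C+x−y)`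
equal to minus the divergence
`div = (1+B)C − (2B+AC)y + (2+B−2C)x − 3x² − 2Axy` of the vector field;
i.e. no reals `λ₁, λ₂, λ₃, λ₄` satisfy `λ₁K₁ + λ₂K₂ + λ₃K₃ + λ₄K₄ + div = 0`
identically. (Hence no Darboux integrating factor from these cofactors.) -/
theorem stmt_6 (A B C : ℝ) (hA : 0 < A) (hB : 0 < B) (hC : 0 < C) :
    ¬ ∃ l₁ l₂ l₃ l₄ : ℝ, ∀ x y : ℝ,
      l₁ * ((C + x) * (1 - x - A * y)) + l₂ * (x * (1 - x - A * y)) +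
        l₃ * (B * (C + x - y)) + l₄ * (B * y * (C + x - y)) +
        ((1 + B) * C - (2 * B + A * C) * y + (2 + B - 2 * C) * x
          - 3 * x ^ 2 - 2 * A * x * y) = 0 := by
  rintro ⟨l₁, l₂, l₃, l₄, h⟩
  have k : B * l₄ = 0 := by
    linear_combination (-(1:ℝ)/2) * h 0 0 + h 0 1 + (-(1:ℝ)/2) * h 0 2
  have hA0 : A = 0 := by
    linear_combination (h 1 1 - h 1 0 - h 0 1 + h 0 0) - (A/2) * (h 2 0 - 2 * h 1 0 + h 0 0) - k
  linarith
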